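/- Let H be a Hilbert space, C = R − J ∈ B(H) with R self-adjoint nonnegative and J skew-adjoint, and m ∈ ℕ. Then there exists κ₁ > 0 with ∑_{j=0}^{m} J^j R (J*)^j ≥ κ₁ I if and only if there exists κ₃ > 0 with ∑_{j=0}^{m} (C*)^j R C^j ≥ κ₃ I. -/

import Mathlib

open ContinuousLinearMap
open scoped InnerProductSpace

section Aux
variable {H : Type*} [NormedAddCommGroup H] [InnerProductSpace ℂ H] [CompleteSpace H]

noncomputable def qf (R : H →L[ℂ] H) (y : H) : ℝ := (⟪R y, y⟫_ℂ).re

lemma qf_nonneg {R : H →L[ℂ] H} (hR : R.IsPositive) (y : H) : 0 ≤ qf R y :=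
  hR.re_inner_nonneg_left y

lemma qf_expand {R : H →L[ℂ] H} (hR : R.IsPositive) (u v : H) :
    qf R (u + v) = qf R u + qf R v + 2 * (⟪R u, v⟫_ℂ).re := by
  have hsym : (⟪R v, u⟫_ℂ).re = (⟪R u, v⟫_ℂ).re := by
    have h := hR.1 v u
    simp only [ContinuousLinearMap.coe_coe] at h
    rw [h, ← inner_conj_symm v (R u), Complex.conj_re]
  simp only [qf, map_add, inner_add_left, inner_add_right, Complex.add_re]
  linarith

lemma qf_neg (R : H →L[ℂ] H) (v : H) : qf R (-v) = qf R v := by simp [qf]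

lemma qf_expand_sub {R : H →L[ℂ] H} (hR : R.IsPositive) (u v : H) :
    qf R (u - v) = qf R u + qf R v - 2 * (⟪R u, v⟫_ℂ).re := by
  have h := qf_expand hR u (-v)
  simp only [inner_neg_right, Complex.neg_re] at h
  rw [sub_eq_add_neg, h, qf_neg]; ring

lemma qf_add_le {R : H →L[ℂ] H} (hR : R.IsPositive) (u v : H) :
    qf R (u + v) ≤ 2 * qf R u + 2 * qf R v := by
  have h1 := qf_expand hR u v
  have h2 := qf_expand_sub hR u v
  have h3 := qf_nonneg hR (u - v)
  linarith

lemma qf_le_norm (R : H →L[ℂ] H) (y : H) : qf R y ≤ ‖R‖ * ‖y‖ ^ 2 := by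
  have h1 : qf R y ≤ ‖(⟪R y, y⟫_ℂ)‖ := by
    simpa [qf] using Complex.re_le_norm (⟪R y, y⟫_ℂ)
  have h2 : ‖(⟪R y, y⟫_ℂ)‖ ≤ ‖R y‖ * ‖y‖ := norm_inner_le_norm _ _
  have h3 : ‖R y‖ ≤ ‖R‖ * ‖y‖ := R.le_opNorm y
  nlinarith [norm_nonneg y, norm_nonneg (R y)]

lemma norm_apply_sq_le {R : H →L[ℂ] H} (hR : R.IsPositive) (y : H) :
    ‖R y‖ ^ 2 ≤ ‖R‖ * qf R y := by
  have ha0 : 0 ≤ qf R y := qf_nonneg hR y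
  have hb : qf R (R y) ≤ ‖R‖ * ‖R y‖ ^ 2 := qf_le_norm R (R y)
  -- the key positivity with t = ‖R‖
  have hsm : ∀ t : ℝ, qf R ((t : ℂ) • y) = t ^ 2 * qf R y := by
    intro t
    have : (⟪R ((t : ℂ) • y), (t : ℂ) • y⟫_ℂ) = ((t ^ 2 : ℝ) : ℂ) * ⟪R y, y⟫_ℂ := by
      rw [map_smul, inner_smul_left, inner_smul_right, Complex.conj_ofReal]
      push_cast; ring
    simp only [qf]
    rw [this]
    simp only [Complex.mul_re, Complex.ofReal_re, Complex.ofReal_im]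
    ring
  have hcross : ∀ t : ℝ, (⟪R ((t : ℂ) • y), R y⟫_ℂ).re = t * ‖R y‖ ^ 2 := by
    intro t
    rw [map_smul, inner_smul_left, Complex.conj_ofReal, Complex.re_ofReal_mul]
    congr 1
    simpa using inner_self_eq_norm_sq (𝕜 := ℂ) (R y)
  have key : 0 ≤ ‖R‖ ^ 2 * qf R y - 2 * ‖R‖ * ‖R y‖ ^ 2 + qf R (R y) := by
    have h0 := qf_nonneg hR ((‖R‖ : ℂ) • y - R y)
    rw [qf_expand_sub hR ((‖R‖ : ℂ) • y) (R y), hsm, hcross] at h0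
    linarith
  rcases (norm_nonneg R).eq_or_lt with h | h
  · have h3 : ‖R y‖ ≤ ‖R‖ * ‖y‖ := R.le_opNorm y
    rw [← h] at h3
    have h4 : ‖R y‖ = 0 := le_antisymm (by simpa using h3) (norm_nonneg _)
    rw [h4, ← h]
    simp
  · nlinarith

lemma qf_comp_R {R : H →L[ℂ] H} (hR : R.IsPositive) (A : H →L[ℂ] H) (y : H) :
    qf R (A (R y)) ≤ ‖R‖ ^ 2 * ‖A‖ ^ 2 * qf R y := by
  have h1 : qf R (A (R y)) ≤ ‖R‖ * ‖A (R y)‖ ^ 2 := qf_le_norm R _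
  have h2 : ‖A (R y)‖ ≤ ‖A‖ * ‖R y‖ := A.le_opNorm _
  have h3 : ‖R y‖ ^ 2 ≤ ‖R‖ * qf R y := norm_apply_sq_le hR y
  have h4 : 0 ≤ qf R y := qf_nonneg hR y
  have h2' : ‖A (R y)‖ ^ 2 ≤ ‖A‖ ^ 2 * ‖R y‖ ^ 2 := by
    nlinarith [norm_nonneg (A (R y)), norm_nonneg (R y), norm_nonneg A]
  calc qf R (A (R y)) ≤ ‖R‖ * ‖A (R y)‖ ^ 2 := h1
    _ ≤ ‖R‖ * (‖A‖ ^ 2 * ‖R y‖ ^ 2) := by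
        exact mul_le_mul_of_nonneg_left h2' (norm_nonneg R)
    _ ≤ ‖R‖ * (‖A‖ ^ 2 * (‖R‖ * qf R y)) := by
        have := mul_le_mul_of_nonneg_left h3 (by positivity : (0:ℝ) ≤ ‖A‖ ^ 2)
        exact mul_le_mul_of_nonneg_left this (norm_nonneg R)
    _ = ‖R‖ ^ 2 * ‖A‖ ^ 2 * qf R y := by ring

lemma aux_pow {R C D E : H →L[ℂ] H} (hR : R.IsPositive) (hCD : C = D + E)
    (hE : ∀ (A : H →L[ℂ] H) (y : H), qf R (A (E y)) ≤ ‖R‖ ^ 2 * ‖A‖ ^ 2 * qf R y)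
    (j : ℕ) :
    ∃ K : ℝ, 0 < K ∧ ∀ x : H,
      qf R ((C ^ j) x) ≤ K * ∑ i ∈ Finset.range (j + 1), qf R ((D ^ i) x) := by
  induction j with
  | zero => exact ⟨1, one_pos, fun x => by simp⟩
  | succ j ih =>
    obtain ⟨K, hK, hKx⟩ := ih
    set B : ℝ := ‖R‖ ^ 2 * ‖(C ^ j : H →L[ℂ] H)‖ ^ 2 with hB
    have hB0 : 0 ≤ B := by positivity
    refine ⟨2 * K + 2 * B + 1, by positivity, fun x => ?_⟩
    have hS0 : ∀ i ∈ Finset.range (j + 2), 0 ≤ qf R ((D ^ i) x) :=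
      fun i _ => qf_nonneg hR _
    set S : ℝ := ∑ i ∈ Finset.range (j + 2), qf R ((D ^ i) x) with hS
    have hSnn : 0 ≤ S := Finset.sum_nonneg hS0
    have h1 : (C ^ (j + 1)) x = (C ^ j) (D x) + (C ^ j) (E x) := by
      rw [pow_succ, ContinuousLinearMap.mul_apply, hCD]
      simp [map_add]
    have h2 : qf R ((C ^ (j + 1)) x) ≤ 2 * qf R ((C ^ j) (D x)) + 2 * qf R ((C ^ j) (E x)) := by
      rw [h1]; exact qf_add_le hR _ _
    have h3 : qf R ((C ^ j) (D x)) ≤ K * ∑ i ∈ Finset.range (j + 1), qf R ((D ^ i) (D x)) :=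
      hKx (D x)
    have h4 : ∑ i ∈ Finset.range (j + 1), qf R ((D ^ i) (D x)) ≤ S := by
      have hrw : ∀ i : ℕ, (D ^ i) (D x) = (D ^ (i + 1)) x := by
        intro i; rw [pow_succ, ContinuousLinearMap.mul_apply]
      rw [hS, Finset.sum_range_succ' (fun i => qf R ((D ^ i) x)) (j + 1)]
      have : ∑ i ∈ Finset.range (j + 1), qf R ((D ^ i) (D x))
          = ∑ i ∈ Finset.range (j + 1), qf R ((D ^ (i + 1)) x) := by
        refine Finset.sum_congr rfl fun i _ => by rw [hrw]
      rw [this]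
      have := qf_nonneg hR ((D ^ 0) x)
      linarith
    have h5 : qf R ((C ^ j) (E x)) ≤ B * qf R x := hE (C ^ j) x
    have h6 : qf R x ≤ S := by
      have hx0 : qf R ((D ^ 0) x) = qf R x := by simp
      calc qf R x = qf R ((D ^ 0) x) := hx0.symm
        _ ≤ S := Finset.single_le_sum hS0 (by simp)
    have hq0 : 0 ≤ qf R x := qf_nonneg hR x
    nlinarith [mul_le_mul_of_nonneg_left h4 hK.le, mul_le_mul_of_nonneg_left h6 hB0]

lemma aux_sum {R C D E : H →L[ℂ] H} (hR : R.IsPositive) (hCD : C = D + E)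
    (hE : ∀ (A : H →L[ℂ] H) (y : H), qf R (A (E y)) ≤ ‖R‖ ^ 2 * ‖A‖ ^ 2 * qf R y)
    (m : ℕ) :
    ∃ K : ℝ, 0 < K ∧ ∀ x : H,
      ∑ j ∈ Finset.range (m + 1), qf R ((C ^ j) x)
        ≤ K * ∑ i ∈ Finset.range (m + 1), qf R ((D ^ i) x) := by
  choose K hK hKx using aux_pow hR hCD hE
  refine ⟨∑ j ∈ Finset.range (m + 1), K j,
    Finset.sum_pos (fun j _ => hK j) ⟨0, by simp⟩, fun x => ?_⟩
  set S : ℝ := ∑ i ∈ Finset.range (m + 1), qf R ((D ^ i) x) with hS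
  have hSnn : 0 ≤ S := Finset.sum_nonneg fun i _ => qf_nonneg hR _
  have hterm : ∀ j ∈ Finset.range (m + 1), qf R ((C ^ j) x) ≤ K j * S := by
    intro j hj
    refine le_trans (hKx j x) (mul_le_mul_of_nonneg_left ?_ (hK j).le)
    refine Finset.sum_le_sum_of_subset_of_nonneg ?_ (fun i _ _ => qf_nonneg hR _)
    exact Finset.range_subset_range.2 (Finset.mem_range.1 hj)
  calc ∑ j ∈ Finset.range (m + 1), qf R ((C ^ j) x)
      ≤ ∑ j ∈ Finset.range (m + 1), K j * S := Finset.sum_le_sum hterm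
    _ = (∑ j ∈ Finset.range (m + 1), K j) * S := by rw [Finset.sum_mul]

end Aux

/-- for `C = R − J`, coercivity of `∑_{j=0}^m J^j R (J*)^j` is equivalent to
coercivity of `∑_{j=0}^m (C*)^j R C^j`. -/
theorem coercive_J_sum_iff_coercive_Cstar_sum
    {H : Type*} [NormedAddCommGroup H] [InnerProductSpace ℂ H]
    [CompleteSpace H] [TopologicalSpace.SeparableSpace H]
    (J R C : H →L[ℂ] H)
    (hJ : ContinuousLinearMap.adjoint J = -J)
    (hR : R.IsPositive)
    (hC : C = R - J)
    (m : ℕ) :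
    (∃ κ₁ : ℝ, 0 < κ₁ ∧ ∀ x : H,
        κ₁ * ‖x‖ ^ 2 ≤ (⟪(∑ j ∈ Finset.range (m + 1),
          (J ^ j) * R * (ContinuousLinearMap.adjoint J) ^ j) x, x⟫_ℂ).re) ↔
    (∃ κ₃ : ℝ, 0 < κ₃ ∧ ∀ x : H,
        κ₃ * ‖x‖ ^ 2 ≤ (⟪(∑ j ∈ Finset.range (m + 1),
          ((ContinuousLinearMap.adjoint C) ^ j) * R * C ^ j) x, x⟫_ℂ).re) := by
  set D : H →L[ℂ] H := ContinuousLinearMap.adjoint J with hD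
  have hCD : C = D + R := by rw [hC, hJ]; abel
  have hDC : D = C + (-R) := by rw [hJ, hC]; abel
  have hE1 : ∀ (A : H →L[ℂ] H) (y : H),
      qf R (A (R y)) ≤ ‖R‖ ^ 2 * ‖A‖ ^ 2 * qf R y := fun A y => qf_comp_R hR A y
  have hE2 : ∀ (A : H →L[ℂ] H) (y : H),
      qf R (A ((-R) y)) ≤ ‖R‖ ^ 2 * ‖A‖ ^ 2 * qf R y := by
    intro A y
    have h : A ((-R) y) = -(A (R y)) := by simp
    rw [h, qf_neg]
    exact qf_comp_R hR A y
  have hadjJ : ∀ j : ℕ, ContinuousLinearMap.adjoint (J ^ j) = D ^ j := by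
    intro j
    rw [hD, ← star_eq_adjoint, ← star_eq_adjoint]
    exact star_pow J j
  have hadjC : ∀ j : ℕ, (ContinuousLinearMap.adjoint C) ^ j
      = ContinuousLinearMap.adjoint (C ^ j) := by
    intro j
    rw [← star_eq_adjoint, ← star_eq_adjoint]
    exact (star_pow C j).symm
  have hrw1 : ∀ x : H, (⟪(∑ j ∈ Finset.range (m + 1),
      (J ^ j) * R * D ^ j) x, x⟫_ℂ).re
      = ∑ j ∈ Finset.range (m + 1), qf R ((D ^ j) x) := by
    intro x
    rw [ContinuousLinearMap.sum_apply, sum_inner, Complex.re_sum]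
    refine Finset.sum_congr rfl fun j _ => ?_
    have h1 : (J ^ j * R * D ^ j) x = (J ^ j) (R ((D ^ j) x)) := by
      simp [mul_apply]
    rw [h1, ← adjoint_inner_right (J ^ j) (R ((D ^ j) x)) x, hadjJ j]
    rfl
  have hrw2 : ∀ x : H, (⟪(∑ j ∈ Finset.range (m + 1),
      ((ContinuousLinearMap.adjoint C) ^ j) * R * C ^ j) x, x⟫_ℂ).re
      = ∑ j ∈ Finset.range (m + 1), qf R ((C ^ j) x) := by
    intro x
    rw [ContinuousLinearMap.sum_apply, sum_inner, Complex.re_sum]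
    refine Finset.sum_congr rfl fun j _ => ?_
    have h1 : ((ContinuousLinearMap.adjoint C) ^ j * R * C ^ j) x
        = (ContinuousLinearMap.adjoint (C ^ j)) (R ((C ^ j) x)) := by
      simp [mul_apply, hadjC j]
    rw [h1, adjoint_inner_left]
    rfl
  constructor
  · rintro ⟨κ, hκ, hx⟩
    obtain ⟨K, hK, hKx⟩ := aux_sum (C := D) (D := C) (E := -R) hR hDC hE2 m
    refine ⟨κ / K, by positivity, fun x => ?_⟩
    rw [hrw2 x]
    have h1 := hx x
    rw [hrw1 x] at h1
    have h2 := hKx x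
    rw [div_mul_eq_mul_div, div_le_iff₀ hK]
    calc κ * ‖x‖ ^ 2 ≤ ∑ j ∈ Finset.range (m + 1), qf R ((D ^ j) x) := h1
      _ ≤ K * ∑ j ∈ Finset.range (m + 1), qf R ((C ^ j) x) := h2
      _ = (∑ j ∈ Finset.range (m + 1), qf R ((C ^ j) x)) * K := mul_comm _ _
  · rintro ⟨κ, hκ, hx⟩
    obtain ⟨K, hK, hKx⟩ := aux_sum (C := C) (D := D) (E := R) hR hCD hE1 m
    refine ⟨κ / K, by positivity, fun x => ?_⟩
    rw [hrw1 x]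
    have h1 := hx x
    rw [hrw2 x] at h1
    have h2 := hKx x
    rw [div_mul_eq_mul_div, div_le_iff₀ hK]
    calc κ * ‖x‖ ^ 2 ≤ ∑ j ∈ Finset.range (m + 1), qf R ((C ^ j) x) := h1
      _ ≤ K * ∑ j ∈ Finset.range (m + 1), qf R ((D ^ j) x) := h2
      _ = (∑ j ∈ Finset.range (m + 1), qf R ((D ^ j) x)) * K := mul_comm _ _
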